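/- Every temporal graph 𝒢 = (G_1,...,G_T) whose snapshots are all Δ-bounded admits a temporal (5Δ+1)-coloring: χ^t(𝒢) ≤ 5Δ+1. -/

import Mathlib

open SimpleGraph

/-- A coloring is proper for a graph if adjacent vertices get different colors. -/
def ProperColoring {V α : Type*} (H : SimpleGraph V) (c : V → α) : Prop :=
  ∀ u v, H.Adj u v → c u ≠ c v

/-- Two colorings are compatible for two consecutive snapshots if, for every edge of
either snapshot, the first coloring of one endpoint differs from the second coloring
of the other endpoint. -/
def Compatible {V α : Type*} (G G' : SimpleGraph V) (c c' : V → α) : Prop :=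
  ∀ u v, (G ⊔ G').Adj u v → c u ≠ c' v

/-- The union of the snapshots at times `i-1`, `i`, `i+1` (those that exist, with
snapshots indexed by `1,…,T`). -/
def Smash {V : Type*} (G : ℕ → SimpleGraph V) (T i : ℕ) : SimpleGraph V :=
  (if 2 ≤ i then G (i - 1) else ⊥) ⊔ G i ⊔ (if i < T then G (i + 1) else ⊥)

/-- A temporal coloring of a temporal graph with snapshots `G 1, …, G T`. -/
def TemporalColoring {V α : Type*} (T : ℕ) (G : ℕ → SimpleGraph V) (c : ℕ → V → α) : Prop :=
  (∀ i, 1 ≤ i → i ≤ T → ProperColoring (Smash G T i) (c i)) ∧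
  (∀ i, 1 ≤ i → i < T → Compatible (G i) (G (i + 1)) (c i) (c (i + 1)))

/-- The temporal chromatic number: the least `k` admitting a temporal `k`-coloring. -/
noncomputable def temporalChromaticNumber {V : Type*} (T : ℕ) (G : ℕ → SimpleGraph V) : ℕ :=
  sInf {k | ∃ c : ℕ → V → Fin k, TemporalColoring T G c}

/-- A graph is `d`-degenerate if every nonempty (finite) subgraph has a vertex of
degree at most `d`. -/
def Degenerate {V : Type*} (H : SimpleGraph V) (d : ℕ) : Prop :=
  ∀ s : Finset V, s.Nonempty → ∃ v ∈ s, ({u | u ∈ s ∧ H.Adj v u} : Set V).ncard ≤ d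

/-- A graph is `Δ`-bounded if every vertex has degree at most `Δ`. -/
def DegLE {V : Type*} (H : SimpleGraph V) (Δ : ℕ) : Prop :=
  ∀ v, (H.neighborSet v).ncard ≤ Δ

lemma degLE_bot' {V : Type*} : DegLE (⊥ : SimpleGraph V) 0 := by
  intro v
  have : (⊥ : SimpleGraph V).neighborSet v = ∅ := by ext u; simp [neighborSet]
  simp [this]

lemma degLE_sup' {V : Type*} [Fintype V] {A B : SimpleGraph V} {a b : ℕ}
    (hA : DegLE A a) (hB : DegLE B b) : DegLE (A ⊔ B) (a + b) := by
  intro v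
  have he : (A ⊔ B).neighborSet v = A.neighborSet v ∪ B.neighborSet v := by
    ext u; simp [neighborSet]
  rw [he]
  calc (A.neighborSet v ∪ B.neighborSet v).ncard
      ≤ (A.neighborSet v).ncard + (B.neighborSet v).ncard := Set.ncard_union_le _ _
    _ ≤ a + b := Nat.add_le_add (hA v) (hB v)

lemma degLE_mono' {V : Type*} {A : SimpleGraph V} {a b : ℕ} (hab : a ≤ b)
    (hA : DegLE A a) : DegLE A b := fun v => le_trans (hA v) hab

lemma greedy' {V : Type*} [Fintype V] {n a b : ℕ} (hn : a + b < n)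
    (H K : SimpleGraph V) (hH : DegLE H a) (hK : DegLE K b) (p : V → Fin n) :
    ∃ c : V → Fin n, ProperColoring H c ∧ ∀ u v, K.Adj u v → p u ≠ c v := by
  classical
  have hn0 : 0 < n := by omega
  have key : ∀ s : Finset V, ∃ c : V → Fin n,
      (∀ u ∈ s, ∀ v ∈ s, H.Adj u v → c u ≠ c v) ∧
      (∀ v ∈ s, ∀ u, K.Adj u v → p u ≠ c v) := by
    intro s
    induction s using Finset.induction_on with
    | empty => exact ⟨fun _ => ⟨0, hn0⟩, by simp, by simp⟩
    | @insert aV s ha ih =>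
      obtain ⟨c, hc1, hc2⟩ := ih
      set forb : Finset (Fin n) :=
        (H.neighborSet aV).toFinset.image c ∪ (K.neighborSet aV).toFinset.image p with hforb
      have hcard : forb.card < n := by
        have h1 : ((H.neighborSet aV).toFinset.image c).card ≤ a := by
          calc ((H.neighborSet aV).toFinset.image c).card ≤ (H.neighborSet aV).toFinset.card :=
                Finset.card_image_le
            _ = (H.neighborSet aV).ncard := (Set.ncard_eq_toFinset_card' _).symm
            _ ≤ a := hH aV
        have h2 : ((K.neighborSet aV).toFinset.image p).card ≤ b := by
          calc ((K.neighborSet aV).toFinset.image p).card ≤ (K.neighborSet aV).toFinset.card :=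
                Finset.card_image_le
            _ = (K.neighborSet aV).ncard := (Set.ncard_eq_toFinset_card' _).symm
            _ ≤ b := hK aV
        calc forb.card ≤ _ + _ := Finset.card_union_le _ _
          _ ≤ a + b := Nat.add_le_add h1 h2
          _ < n := hn
      obtain ⟨x, hx⟩ : ∃ x : Fin n, x ∉ forb := by
        by_contra hcon
        push_neg at hcon
        have : (Finset.univ : Finset (Fin n)) ⊆ forb := fun x _ => hcon x
        have := Finset.card_le_card this
        simp at this
        omega
      have hxH : ∀ u, H.Adj aV u → c u ≠ x := by
        intro u hu hcu
        exact hx (Finset.mem_union_left _ (Finset.mem_image.2 ⟨u, by simpa using hu, hcu⟩))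
      have hxK : ∀ u, K.Adj u aV → p u ≠ x := by
        intro u hu hpu
        exact hx (Finset.mem_union_right _ (Finset.mem_image.2 ⟨u, by simpa using hu.symm, hpu⟩))
      refine ⟨Function.update c aV x, ?_, ?_⟩
      · intro u hu v hv hadj
        have hu' := Finset.mem_insert.1 hu
        have hv' := Finset.mem_insert.1 hv
        by_cases hua : u = aV
        · by_cases hva : v = aV
          · rw [hua, hva] at hadj; exact absurd hadj (H.loopless.irrefl _)
          · rw [hua] at hadj ⊢
            rw [Function.update_self, Function.update_of_ne hva]
            exact fun hcon => hxH v hadj hcon.symm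
        · rw [Function.update_of_ne hua]
          by_cases hva : v = aV
          · rw [hva] at hadj ⊢
            rw [Function.update_self]
            exact hxH u hadj.symm
          · rw [Function.update_of_ne hva]
            exact hc1 u (hu'.resolve_left hua) v (hv'.resolve_left hva) hadj
      · intro v hv u hadj
        by_cases hva : v = aV
        · rw [hva] at hadj ⊢
          rw [Function.update_self]; exact hxK u hadj
        · rw [Function.update_of_ne hva]
          exact hc2 v ((Finset.mem_insert.1 hv).resolve_left hva) u hadj
  obtain ⟨c, h1, h2⟩ := key Finset.univ
  exact ⟨c, fun u v => h1 u (Finset.mem_univ u) v (Finset.mem_univ v),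
    fun u v => h2 v (Finset.mem_univ v) u⟩

def smashG {V : Type*} (G : ℕ → SimpleGraph V) (T i : ℕ) : SimpleGraph V :=
  if 1 ≤ i ∧ i ≤ T then Smash G T i else ⊥

def backG {V : Type*} (G : ℕ → SimpleGraph V) (T i : ℕ) : SimpleGraph V :=
  if 2 ≤ i ∧ i ≤ T then G (i - 1) ⊔ G i else ⊥

lemma degLE_smashG {V : Type*} [Fintype V] {Δ T : ℕ} {G : ℕ → SimpleGraph V}
    (h : ∀ i, 1 ≤ i → i ≤ T → DegLE (G i) Δ) (i : ℕ) :
    DegLE (smashG G T i) (3 * Δ) := by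
  unfold smashG
  by_cases hi : 1 ≤ i ∧ i ≤ T
  · rw [if_pos hi]
    unfold Smash
    have h1 : DegLE (if 2 ≤ i then G (i - 1) else ⊥) Δ := by
      by_cases h2 : 2 ≤ i
      · rw [if_pos h2]; exact h (i - 1) (by omega) (by omega)
      · rw [if_neg h2]; exact degLE_mono' (Nat.zero_le _) degLE_bot'
    have h2 : DegLE (if i < T then G (i + 1) else ⊥) Δ := by
      by_cases h3 : i < T
      · rw [if_pos h3]; exact h (i + 1) (by omega) (by omega)
      · rw [if_neg h3]; exact degLE_mono' (Nat.zero_le _) degLE_bot'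
    exact degLE_mono' (by omega) (degLE_sup' (degLE_sup' h1 (h i hi.1 hi.2)) h2)
  · rw [if_neg hi]; exact degLE_mono' (Nat.zero_le _) degLE_bot'

lemma degLE_backG {V : Type*} [Fintype V] {Δ T : ℕ} {G : ℕ → SimpleGraph V}
    (h : ∀ i, 1 ≤ i → i ≤ T → DegLE (G i) Δ) (i : ℕ) :
    DegLE (backG G T i) (2 * Δ) := by
  unfold backG
  by_cases hi : 2 ≤ i ∧ i ≤ T
  · rw [if_pos hi]
    exact degLE_mono' (by omega)
      (degLE_sup' (h (i - 1) (by omega) (by omega)) (h i (by omega) hi.2))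
  · rw [if_neg hi]; exact degLE_mono' (Nat.zero_le _) degLE_bot'

/-- Every temporal graph whose snapshots are all `Δ`-bounded admits a temporal
`(5Δ+1)`-coloring. -/
theorem statement14 {V : Type*} [Fintype V] (Δ T : ℕ) (G : ℕ → SimpleGraph V)
    (h : ∀ i, 1 ≤ i → i ≤ T → DegLE (G i) Δ) :
    ∃ c : ℕ → V → Fin (5 * Δ + 1), TemporalColoring T G c := by
  classical
  choose f hf1 hf2 using fun (i : ℕ) (p : V → Fin (5 * Δ + 1)) =>
    greedy' (show 3 * Δ + 2 * Δ < 5 * Δ + 1 by omega) (smashG G T i) (backG G T i)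
      (degLE_smashG h i) (degLE_backG h i) p
  let c : ℕ → V → Fin (5 * Δ + 1) :=
    fun i => Nat.rec (fun _ => ⟨0, by omega⟩) (fun j cj => f (j + 1) cj) i
  have hstep : ∀ j, c (j + 1) = f (j + 1) (c j) := fun j => rfl
  refine ⟨c, ?_, ?_⟩
  · intro i hi1 hi2
    obtain ⟨j, rfl⟩ : ∃ j, i = j + 1 := ⟨i - 1, by omega⟩
    have hthis := hf1 (j + 1) (c j)
    have heq : smashG G T (j + 1) = Smash G T (j + 1) := by
      unfold smashG; rw [if_pos ⟨hi1, hi2⟩]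
    rw [heq] at hthis
    rw [hstep j]
    exact hthis
  · intro i hi1 hi2
    intro u v hadj
    have heq : backG G T (i + 1) = G i ⊔ G (i + 1) := by
      unfold backG
      rw [if_pos ⟨by omega, by omega⟩]
      simp
    have hthis := hf2 (i + 1) (c i) u v (by rw [heq]; exact hadj)
    rw [hstep i]
    exact hthis
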